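/- arXiv:1710.10840 — 6 statements merged into one kernel-verified Lean document; each statement's English description precedes it below -/
import Mathlib

section
/- Let R be a commutative ring, N and M R-modules, and n ≥ 1 an integer. Then Tor_q^R(N, M) = 0 for all 1 ≤ q ≤ n if and only if for every injective R-module Q one has Ext^q_R(M, Hom_R(N, Q)) = 0 for all 1 ≤ q ≤ n. -/
open CategoryTheory Limits Opposite

noncomputable section

namespace Stmt2Aux

variable {R : Type} [CommRing R]

lemma comp_forget_eq (Q' : ModuleCat R) :
    (linearYoneda R (ModuleCat R)).obj Q' ⋙ forget (ModuleCat R) = yoneda.obj Q' :=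
  Functor.congr_obj (whiskering_linearYoneda R (ModuleCat R)) Q'

instance preservesLimits_F (Q' : ModuleCat R) :
    PreservesLimits ((linearYoneda R (ModuleCat R)).obj Q') := by
  constructor
  intro J _
  constructor
  intro K
  have h := comp_forget_eq Q'
  have : PreservesLimit K ((linearYoneda R (ModuleCat R)).obj Q' ⋙ forget (ModuleCat R)) := by
    rw [h]; infer_instance
  exact preservesLimit_of_reflects_of_preserves _ (forget (ModuleCat R))

instance preservesEpis_F (Q' : ModuleCat R) [Injective Q'] :
    ((linearYoneda R (ModuleCat R)).obj Q').PreservesEpimorphisms := by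
  constructor
  intro X Y f hf
  rw [ModuleCat.epi_iff_surjective]
  intro (h : unop Y ⟶ Q')
  obtain ⟨g, hg⟩ := Injective.factors h f.unop
  exact ⟨g, hg⟩

instance preservesHomology_F (Q' : ModuleCat R) [Injective Q'] :
    ((linearYoneda R (ModuleCat R)).obj Q').PreservesHomology :=
  Functor.preservesHomology_of_preservesEpis_and_kernels _

instance pfl_F (Q' : ModuleCat R) [Injective Q'] :
    PreservesFiniteLimits ((linearYoneda R (ModuleCat R)).obj Q') :=
  ((linearYoneda R (ModuleCat R)).obj Q').preservesFiniteLimits_of_preservesHomology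

instance pfc_F (Q' : ModuleCat R) [Injective Q'] :
    PreservesFiniteColimits ((linearYoneda R (ModuleCat R)).obj Q') :=
  ((linearYoneda R (ModuleCat R)).obj Q').preservesFiniteColimits_of_preservesHomology

instance pfl_G (Q' : ModuleCat R) [Injective Q'] :
    PreservesFiniteLimits ((linearYoneda R (ModuleCat R)).obj Q').rightOp := by
  constructor
  intro J _ _
  have : PreservesColimitsOfShape Jᵒᵖ ((linearYoneda R (ModuleCat R)).obj Q') :=
    PreservesFiniteColimits.preservesFiniteColimits Jᵒᵖ
  exact preservesLimitsOfShape_rightOp (J := J) (F := (linearYoneda R (ModuleCat R)).obj Q')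

instance pfc_G (Q' : ModuleCat R) [Injective Q'] :
    PreservesFiniteColimits ((linearYoneda R (ModuleCat R)).obj Q').rightOp := by
  constructor
  intro J _ _
  have : PreservesLimitsOfShape Jᵒᵖ ((linearYoneda R (ModuleCat R)).obj Q') :=
    PreservesFiniteLimits.preservesFiniteLimits Jᵒᵖ
  exact preservesColimitsOfShape_rightOp (J := J) (F := (linearYoneda R (ModuleCat R)).obj Q')

instance preservesHomology_G (Q' : ModuleCat R) [Injective Q'] :
    ((linearYoneda R (ModuleCat R)).obj Q').rightOp.PreservesHomology :=
  inferInstance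

variable (R) in
/-- The currying linear equivalence. -/
def homTensorEquiv (N Q : Type) [AddCommGroup N] [Module R N] [AddCommGroup Q] [Module R Q]
    (X : ModuleCat R) :
    (X →ₗ[R] (N →ₗ[R] Q)) ≃ₗ[R] (TensorProduct R N X →ₗ[R] Q) where
  toFun f := TensorProduct.lift f.flip
  invFun g := (TensorProduct.curry g).flip
  map_add' f g := by ext x n; simp
  map_smul' r f := by ext x n; simp
  left_inv f := by ext x n; simp
  right_inv g := by ext n x; simp

section

variable (R) (N M : Type) [AddCommGroup N] [Module R N] [AddCommGroup M] [Module R M]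

/-- tensoring with `N` -/
abbrev Tn : ModuleCat R ⥤ ModuleCat R :=
  (MonoidalCategory.tensoringLeft (ModuleCat R)).obj (ModuleCat.of R N)

/-- a chosen projective resolution of `M` -/
def resol : ProjectiveResolution (ModuleCat.of R M) := projectiveResolution _

/-- the complex `N ⊗ P` computing Tor -/
def Kc : ChainComplex (ModuleCat R) ℕ :=
  ((Tn R N).mapHomologicalComplex _).obj (resol R M).complex

/-- Tor is the homology of `Kc` -/
def torIso (q : ℕ) :
    (((Tor (ModuleCat R) q).obj (ModuleCat.of R N)).obj (ModuleCat.of R M)) ≅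
      (Kc R N M).homology q :=
  (resol R M).isoLeftDerivedObj (Tn R N) q

variable (Q : Type) [AddCommGroup Q] [Module R Q]

/-- the comparison of Hom complexes -/
def cIso :
    (resol R M).complex.linearYonedaObj R (ModuleCat.of R (N →ₗ[R] Q)) ≅
      (Kc R N M).linearYonedaObj R (ModuleCat.of R Q) :=
  HomologicalComplex.Hom.isoOfComponents
    (fun i => ((ModuleCat.homLinearEquiv (S := R)).trans ((homTensorEquiv R N Q ((resol R M).complex.X i)).trans
        (ModuleCat.homLinearEquiv (R := R) (S := R)
          (M := ModuleCat.of R (TensorProduct R N ((resol R M).complex.X i)))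
          (N := ModuleCat.of R Q)).symm)).toModuleIso)
    (by
      intro i j hij
      ext f
      apply ModuleCat.hom_ext
      refine TensorProduct.ext' fun n x => ?_
      dsimp [homTensorEquiv, Kc, Tn]
      rfl)

/-- Ext into `Hom(N,Q)` is `Hom(Tor, Q)` for injective `Q`. -/
def extIso [Module.Injective R Q] (q : ℕ) :
    (((Ext R (ModuleCat R) q).obj (op (ModuleCat.of R M))).obj
        (ModuleCat.of R (N →ₗ[R] Q))) ≅
      ModuleCat.of R ((Kc R N M).homology q ⟶ ModuleCat.of R Q) := by
  haveI : Injective (ModuleCat.of R Q) := Module.injective_object_of_injective_module R Q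
  refine ((resol R M).isoExt q (ModuleCat.of R (N →ₗ[R] Q))) ≪≫
    (HomologicalComplex.homologyFunctor (ModuleCat R) (ComplexShape.up ℕ) q).mapIso
      (cIso R N M Q) ≪≫
    (HomologicalComplex.homologyUnop
      ((((linearYoneda R (ModuleCat R)).obj (ModuleCat.of R Q)).rightOp.mapHomologicalComplex
        (ComplexShape.down ℕ)).obj (Kc R N M)) q) ≪≫
    (ShortComplex.mapHomologyIso ((Kc R N M).sc q)
      ((linearYoneda R (ModuleCat R)).obj (ModuleCat.of R Q)).rightOp).unop.symm

/-- underlying equiv of an iso of modules -/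
def isoEquiv {X Y : ModuleCat R} (e : X ≅ Y) : (X : Type) ≃ (Y : Type) :=
  ((forget (ModuleCat R)).mapIso e).toEquiv

end

end Stmt2Aux

end

open Stmt2Aux

/-- Let `R` be a commutative ring, `N` and `M` two `R`-modules and `n ≥ 1`.
Then `Tor_q^R(N, M) = 0` for all `1 ≤ q ≤ n` if and only if for every injective `R`-module `Q`
one has `Ext^q_R(M, Hom_R(N, Q)) = 0` for all `1 ≤ q ≤ n`. -/
theorem stmt2 (R : Type) [CommRing R]
    (N M : Type) [AddCommGroup N] [Module R N] [AddCommGroup M] [Module R M]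
    (n : ℕ) (hn : 1 ≤ n) :
    (∀ q, 1 ≤ q → q ≤ n →
        Subsingleton
          (((Tor (ModuleCat R) q).obj (ModuleCat.of R N)).obj (ModuleCat.of R M))) ↔
      (∀ (Q : Type) [AddCommGroup Q] [Module R Q], Module.Injective R Q →
        ∀ q, 1 ≤ q → q ≤ n →
          Subsingleton
            (((Ext R (ModuleCat R) q).obj
                (Opposite.op (ModuleCat.of R M))).obj (ModuleCat.of R (N →ₗ[R] Q)))) := by
  constructor
  · intro h Q _ _ hQ q h1 h2
    haveI : Module.Injective R Q := hQ
    haveI := h q h1 h2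
    haveI hT : Subsingleton ((Kc R N M).homology q : Type) :=
      (isoEquiv R (torIso R N M q)).symm.subsingleton
    haveI hHom : Subsingleton ((Kc R N M).homology q ⟶ ModuleCat.of R Q) :=
      ⟨fun f g => ModuleCat.hom_ext (LinearMap.ext fun x => by
        rw [Subsingleton.elim x 0, map_zero, map_zero])⟩
    exact @Equiv.subsingleton _ _ (isoEquiv R (extIso R N M Q q)) hHom
  · intro h q h1 h2
    set T := (Kc R N M).homology q with hTdef
    haveI hJ : Injective (ModuleCat.of R ((Injective.under T : ModuleCat R) : Type)) :=
      (inferInstance : Injective (Injective.under T))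
    haveI hQ : Module.Injective R ((Injective.under T : ModuleCat R) : Type) :=
      Module.injective_module_of_injective_object R _
    have hext := h ((Injective.under T : ModuleCat R) : Type) hQ q h1 h2
    haveI hsub : Subsingleton (T ⟶ ModuleCat.of R ((Injective.under T : ModuleCat R) : Type)) :=
      (isoEquiv R (extIso R N M _ q)).symm.subsingleton
    have h0 : Injective.ι T = (0 : T ⟶ Injective.under T) :=
      @Subsingleton.elim _ hsub _ _
    have hι : Function.Injective (Injective.ι T) :=
      (ModuleCat.mono_iff_injective _).mp inferInstance
    haveI hTsub : Subsingleton (T : Type) :=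
      ⟨fun a b => hι (by rw [h0]; rfl)⟩
    exact (isoEquiv R (torIso R N M q)).subsingleton
end

section
/- Let R be a commutative ring and (r_1,…,r_k,s_1,…,s_l) a regular sequence in R such that the subsequence (s_1,…,s_l) is itself a regular sequence. Let I = (r_1,…,r_k) and J = (s_1,…,s_l) be the ideals generated by the two parts. Then I ∩ J = I·J. -/
open RingTheory.Sequence Ideal

lemma quot_smul_regular_key {R : Type} [CommRing R] {K : Ideal R} {s : R}
    (h : IsSMulRegular (R ⧸ (K • ⊤ : Submodule R R)) s) {a : R}
    (ha : s * a ∈ K) : a ∈ K := by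
  have hKtop : (K • ⊤ : Submodule R R) = K := by
    rw [smul_eq_mul, mul_top]
  have : s • (Submodule.Quotient.mk a : R ⧸ (K • ⊤ : Submodule R R)) = s • 0 := by
    rw [smul_zero, ← Submodule.Quotient.mk_smul, Submodule.Quotient.mk_eq_zero,
      hKtop, smul_eq_mul]
    exact ha
  have := h this
  rwa [Submodule.Quotient.mk_eq_zero, hKtop] at this

lemma stmt3_aux {R : Type} [CommRing R] (rs ss : List R)
    (hreg : RingTheory.Sequence.IsWeaklyRegular R (rs ++ ss)) :
    Ideal.ofList rs ⊓ Ideal.ofList ss = Ideal.ofList rs * Ideal.ofList ss := by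
  induction ss using List.reverseRecOn with
  | nil => simp
  | append_singleton ss' s ih =>
    rw [← List.append_assoc] at hreg
    rw [isWeaklyRegular_append_iff] at hreg
    obtain ⟨h1, h2⟩ := hreg
    have ih' := ih h1
    rw [isWeaklyRegular_singleton_iff] at h2
    -- key regularity fact
    set I := Ideal.ofList rs with hI
    set J := Ideal.ofList ss' with hJ
    have hK : Ideal.ofList (rs ++ ss') = I ⊔ J := Ideal.ofList_append rs ss'
    rw [hK] at h2
    have hOF : Ideal.ofList (ss' ++ [s]) = J ⊔ Ideal.span {s} := by
      rw [Ideal.ofList_append, Ideal.ofList_singleton]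
    rw [hOF]
    apply le_antisymm
    · rintro x ⟨hxI, hxJ⟩
      rw [SetLike.mem_coe, Submodule.mem_sup] at hxJ
      obtain ⟨y, hy, z, hz, rfl⟩ := hxJ
      rw [Ideal.mem_span_singleton'] at hz
      obtain ⟨a, rfl⟩ := hz
      have haK : a ∈ I ⊔ J := by
        apply quot_smul_regular_key h2
        have : s * a = (y + a * s) - y := by ring
        rw [this]
        exact sub_mem (Submodule.mem_sup_left hxI) (Submodule.mem_sup_right hy)
      rw [Submodule.mem_sup] at haK
      obtain ⟨i, hi, j, hj, rfl⟩ := haK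
      have hsplit : y + (i + j) * s = (y + j * s) + i * s := by ring
      rw [hsplit]
      apply add_mem
      · have hmem : y + j * s ∈ I ⊓ J := by
          constructor
          · have his : i * s ∈ I := I.mul_mem_right s hi
            have : y + j * s = (y + (i + j) * s) - i * s := by ring
            rw [this]
            exact sub_mem hxI his
          · exact add_mem hy (J.mul_mem_right s hj)
        rw [ih'] at hmem
        exact mul_le_mul_right le_sup_left I hmem
      · exact Ideal.mul_mem_mul hi (Submodule.mem_sup_right
          (Ideal.mem_span_singleton_self s))
    · exact Ideal.mul_le_inf

/-- Let `R` be a commutative ring and `(r_1, …, r_k, s_1, …, s_l)` a regular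
sequence in `R` (in the sense that for each `i` the image of the next element in the quotient by
the ideal generated by the previous ones is not a zero-divisor, i.e. a weakly regular sequence)
such that the subsequence `(s_1, …, s_l)` is itself a regular sequence.  Let
`I = (r_1, …, r_k)` and `J = (s_1, …, s_l)`.  Then `I ∩ J = I·J`. -/
theorem stmt3 (R : Type) [CommRing R] (rs ss : List R)
    (hreg : RingTheory.Sequence.IsWeaklyRegular R (rs ++ ss))
    (hss : RingTheory.Sequence.IsWeaklyRegular R ss) :
    Ideal.span {x | x ∈ rs} ⊓ Ideal.span {x | x ∈ ss} =
      Ideal.span {x | x ∈ rs} * Ideal.span {x | x ∈ ss} := by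
  exact stmt3_aux rs ss hreg
end

section
/- Let R be a commutative Noetherian local ring with maximal ideal 𝔪 and finite residue field, and let M be a finitely generated R-module. Then the submodule Γ(M) = { x ∈ M | 𝔪^k · x = 0 for some k ≥ 0 } is a finite set, and every R-submodule of M that is finite as a set is contained in Γ(M); that is, Γ(M) is the maximal finite submodule of M. -/
open IsLocalRing

lemma auxFin (R : Type) [CommRing R] [IsNoetherianRing R] [IsLocalRing R]
    [Finite (ResidueField R)] :
    ∀ (n : ℕ) (M : Type) [AddCommGroup M] [Module R M] [Module.Finite R M],
      (maximalIdeal R) ^ n • (⊤ : Submodule R M) = ⊥ → Finite M := by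
  intro n
  induction n with
  | zero =>
    intro M _ _ _ h
    rw [pow_zero, Ideal.one_eq_top, Submodule.top_smul] at h
    have hs : Subsingleton M := ⟨fun a b => by
      have ha : a ∈ (⊥ : Submodule R M) := h ▸ Submodule.mem_top
      have hb : b ∈ (⊥ : Submodule R M) := h ▸ Submodule.mem_top
      simp only [Submodule.mem_bot] at ha hb
      rw [ha, hb]⟩
    exact Finite.of_subsingleton
  | succ n ih =>
    intro M _ _ _ h
    set N : Submodule R M := (maximalIdeal R) • ⊤ with hN
    -- Finite (M ⧸ N)
    have htor : Module.IsTorsionBySet R (M ⧸ N) (maximalIdeal R) := by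
      intro x a
      obtain ⟨y, rfl⟩ := Submodule.Quotient.mk_surjective N x
      rw [← Submodule.Quotient.mk_smul, Submodule.Quotient.mk_eq_zero]
      exact Submodule.smul_mem_smul a.2 trivial
    letI := htor.module
    haveI : Module.Finite (R ⧸ maximalIdeal R) (M ⧸ N) :=
      Module.Finite.of_restrictScalars_finite R _ _
    haveI : Finite (R ⧸ maximalIdeal R) := inferInstanceAs (Finite (ResidueField R))
    haveI hq : Finite (M ⧸ N) := Module.finite_of_finite (R ⧸ maximalIdeal R)
    -- Finite N
    have hmap : (maximalIdeal R) ^ n • (⊤ : Submodule R N) = ⊥ := by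
      apply Submodule.map_injective_of_injective N.injective_subtype
      rw [Submodule.map_smul'', Submodule.map_subtype_top, Submodule.map_bot, hN,
        ← Submodule.smul_assoc, smul_eq_mul, ← pow_succ]
      exact h
    haveI hfn : Finite N := ih N hmap
    haveI : Finite N.toAddSubgroup := hfn
    haveI : Finite (M ⧸ N.toAddSubgroup) := hq
    exact Finite.of_equiv _ (AddSubgroup.addGroupEquivQuotientProdAddSubgroup (s := N.toAddSubgroup)).symm

/-- Let `R` be a commutative Noetherian local ring with maximal ideal `𝔪` and
finite residue field, and `M` a finitely generated `R`-module.  Then the set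
`Γ(M) = {x ∈ M | 𝔪^k • x = 0 for some k}` is finite, and every finite `R`-submodule of `M` is
contained in `Γ(M)`; i.e. `Γ(M)` is the maximal finite submodule of `M`. -/
theorem stmt8 (R : Type) [CommRing R] [IsNoetherianRing R] [IsLocalRing R]
    [Finite (IsLocalRing.ResidueField R)]
    (M : Type) [AddCommGroup M] [Module R M] [Module.Finite R M] :
    {x : M | ∃ k : ℕ, ∀ a ∈ IsLocalRing.maximalIdeal R ^ k, a • x = 0}.Finite ∧
      ∀ N : Submodule R M, (N : Set M).Finite →
        (N : Set M) ⊆ {x : M | ∃ k : ℕ, ∀ a ∈ IsLocalRing.maximalIdeal R ^ k, a • x = 0} := by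
  constructor
  · set f : ℕ →o Submodule R M :=
      ⟨fun k => Submodule.torsionBySet R M ((maximalIdeal R ^ k : Ideal R) : Set R),
        fun k m hkm => Submodule.torsionBySet_le_torsionBySet_of_subset
          (Ideal.pow_le_pow_right hkm)⟩ with hf
    obtain ⟨n, hn⟩ := monotone_stabilizes_iff_noetherian.mpr inferInstance f
    have hΓ : {x : M | ∃ k : ℕ, ∀ a ∈ maximalIdeal R ^ k, a • x = 0} = (f n : Set M) := by
      ext x
      simp only [Set.mem_setOf_eq, SetLike.mem_coe, hf, OrderHom.coe_mk,
        Submodule.mem_torsionBySet_iff, Subtype.forall, SetLike.mem_coe]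
      constructor
      · rintro ⟨k, hk⟩
        have : x ∈ f (max k n) := by
          simp only [hf, OrderHom.coe_mk, Submodule.mem_torsionBySet_iff, Subtype.forall]
          exact (Submodule.mem_torsionBySet_iff _ _).2 fun ⟨a, ha⟩ => hk a (Ideal.pow_le_pow_right (le_max_left k n) ha)
        rw [← hn (max k n) (le_max_right k n)] at this
        simpa only [hf, OrderHom.coe_mk, Submodule.mem_torsionBySet_iff, Subtype.forall]
          using this
      · exact fun h => ⟨n, fun a ha => (Submodule.mem_torsionBySet_iff _ _).1 h ⟨a, ha⟩⟩
    rw [hΓ]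
    -- finiteness of f n
    haveI : Module.Finite R (f n) := Module.Finite.iff_fg.mpr (IsNoetherian.noetherian _)
    letI : Module (R ⧸ maximalIdeal R ^ n) (f n) :=
      (Submodule.torsionBySet_isTorsionBySet _).module
    haveI : Module.Finite (R ⧸ maximalIdeal R ^ n) (f n) :=
      Module.Finite.of_restrictScalars_finite R _ _
    haveI : Finite (R ⧸ maximalIdeal R ^ n) := by
      refine auxFin R n _ ?_
      rw [eq_bot_iff]
      refine Submodule.smul_le.2 fun a ha x _ => ?_
      obtain ⟨y, rfl⟩ := Submodule.Quotient.mk_surjective _ x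
      rw [Submodule.mem_bot, ← Submodule.Quotient.mk_smul, Submodule.Quotient.mk_eq_zero,
        smul_eq_mul]
      exact Ideal.mul_mem_right y _ ha
    haveI : Finite (f n) := Module.finite_of_finite (R ⧸ maximalIdeal R ^ n)
    exact (f n : Set M).toFinite
  · intro N hNfin x hx
    set P := Submodule.span R {x} with hP
    have hPN : P ≤ N := (Submodule.span_singleton_le_iff_mem x N).2 hx
    have hfin : ∀ k : ℕ, ((maximalIdeal R ^ k • P : Submodule R M) : Set M).Finite :=
      fun k => hNfin.subset (le_trans (Submodule.smul_le_right) hPN)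
    have hanti : ∀ k : ℕ, (maximalIdeal R ^ (k + 1) • P : Submodule R M) ≤
        maximalIdeal R ^ k • P :=
      fun k => Submodule.smul_mono_left (Ideal.pow_le_pow_right (Nat.le_succ k))
    -- find stabilization point via ncard
    have hstab : ∃ k : ℕ, (maximalIdeal R ^ (k + 1) • P : Submodule R M)
        = maximalIdeal R ^ k • P := by
      by_contra hcon
      push_neg at hcon
      set g : ℕ → ℕ := fun k => ((maximalIdeal R ^ k • P : Submodule R M) : Set M).ncard with hg
      have hlt : ∀ k, g (k + 1) < g k := fun k => Set.ncard_lt_ncard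
        (lt_of_le_of_ne (hanti k) (fun h => hcon k (SetLike.coe_injective h))) (hfin k)
      have hle : ∀ k, g k + k ≤ g 0 := by
        intro k
        induction k with
        | zero => simp
        | succ k ih => have := hlt k; omega
      have h1 := hle (g 0 + 1)
      omega
    obtain ⟨k, hk⟩ := hstab
    have hQ : (maximalIdeal R ^ k • P : Submodule R M) = ⊥ := by
      refine Submodule.eq_bot_of_le_smul_of_le_jacobson_bot (maximalIdeal R) _
        (IsNoetherian.noetherian _) ?_ (IsLocalRing.maximalIdeal_le_jacobson ⊥)
      rw [← Submodule.smul_assoc, smul_eq_mul, ← pow_succ', hk]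
    refine ⟨k, fun a ha => ?_⟩
    have : a • x ∈ (maximalIdeal R ^ k • P : Submodule R M) :=
      Submodule.smul_mem_smul ha (Submodule.mem_span_singleton_self x)
    rwa [hQ, Submodule.mem_bot] at this
end

section
/- Let R be a commutative Noetherian local ring with maximal ideal 𝔪 which is 𝔪-adically complete and has finite residue field. Let E be the R-module of additive group homomorphisms f : R → ℚ/ℤ such that f vanishes on 𝔪^k for some k, with R-action (r·f)(x) = f(rx). Then E is an injective R-module. -/
open IsLocalRing

/-- The additive group `ℚ/ℤ`: the quotient of the additive group of the rationals by the
subgroup of integers (the integer multiples of `1`). -/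
abbrev QmodZ : Type := ℚ ⧸ AddSubgroup.zmultiples (1 : ℚ)

/-- The subgroup of `Hom_ℤ(R, ℚ/ℤ)` consisting of the additive homomorphisms `f : R → ℚ/ℤ`
vanishing on `𝔪^k` for some `k`, where `𝔪` is the maximal ideal of the local ring `R`. -/
def matlisSub (R : Type) [CommRing R] [IsLocalRing R] : AddSubgroup (R →+ QmodZ) where
  carrier := {f | ∃ k : ℕ, ∀ x ∈ maximalIdeal R ^ k, f x = 0}
  zero_mem' := ⟨0, fun x _ => rfl⟩
  add_mem' := by
    rintro f g ⟨k, hk⟩ ⟨l, hl⟩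
    refine ⟨k + l, fun x hx => ?_⟩
    rw [AddMonoidHom.add_apply, hk x (Ideal.pow_le_pow_right (Nat.le_add_right k l) hx),
      hl x (Ideal.pow_le_pow_right (Nat.le_add_left l k) hx), add_zero]
  neg_mem' := by
    rintro f ⟨k, hk⟩
    exact ⟨k, fun x hx => by rw [AddMonoidHom.neg_apply, hk x hx, neg_zero]⟩

/-- The type `E` of additive homomorphisms `f : R → ℚ/ℤ` vanishing on a power of the maximal
ideal. -/
abbrev MatlisE (R : Type) [CommRing R] [IsLocalRing R] : Type := ↥(matlisSub R)

/-- The `R`-module structure on `E` given by `(r · f)(x) = f (r x)`. -/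
instance matlisModule (R : Type) [CommRing R] [IsLocalRing R] : Module R (MatlisE R) where
  smul r f := ⟨(f : R →+ QmodZ).comp (AddMonoidHom.mulLeft r), by
    obtain ⟨k, hk⟩ := f.2
    exact ⟨k, fun x hx => hk _ (Ideal.mul_mem_left _ r hx)⟩⟩
  one_smul f := Subtype.ext (AddMonoidHom.ext fun x => by
    show (f : R →+ QmodZ) (1 * x) = (f : R →+ QmodZ) x
    rw [one_mul])
  mul_smul r s f := Subtype.ext (AddMonoidHom.ext fun x => by
    show (f : R →+ QmodZ) ((r * s) * x) = (f : R →+ QmodZ) (s * (r * x))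
    rw [← mul_assoc, mul_comm r s])
  smul_zero r := Subtype.ext (AddMonoidHom.ext fun x => rfl)
  smul_add r f g := Subtype.ext (AddMonoidHom.ext fun x => rfl)
  add_smul r s f := Subtype.ext (AddMonoidHom.ext fun x => by
    show (f : R →+ QmodZ) ((r + s) * x) =
      (f : R →+ QmodZ) (r * x) + (f : R →+ QmodZ) (s * x)
    rw [add_mul, map_add])
  zero_smul f := Subtype.ext (AddMonoidHom.ext fun x => by
    show (f : R →+ QmodZ) (0 * x) = 0
    rw [zero_mul, map_zero])

/-- Let `R` be a commutative Noetherian local ring with maximal ideal `𝔪`,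
`𝔪`-adically complete and with finite residue field.  Then the `R`-module `E` of additive
homomorphisms `f : R → ℚ/ℤ` vanishing on some power of `𝔪`, with the action
`(r · f)(x) = f (r x)`, is an injective `R`-module. -/
theorem stmt12 (R : Type) [CommRing R] [IsLocalRing R] [IsNoetherianRing R]
    [IsAdicComplete (maximalIdeal R) R] [Finite (ResidueField R)] :
    Module.Injective R (MatlisE R) := by
  classical
  haveI : Fact (0 < (1:ℚ)) := ⟨one_pos⟩
  haveI : DivisibleBy QmodZ ℤ := inferInstanceAs (DivisibleBy (AddCircle (1:ℚ)) ℤ)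
  haveI injQZ : Module.Injective ℤ QmodZ := (Module.Baer.of_divisible QmodZ).injective
  apply Module.Baer.injective
  intro I φ
  have smul_apply : ∀ (r : R) (f : MatlisE R) (y : R),
      ((r • f : MatlisE R) : R →+ QmodZ) y = (f : R →+ QmodZ) (r * y) := fun _ _ _ => rfl
  -- Step 1: uniform vanishing exponent k
  obtain ⟨s, hs⟩ := IsNoetherian.noetherian (⊤ : Submodule R ↥I)
  set k : ℕ := s.sup fun x => ((φ x).2).choose with hk_def
  have hk : ∀ (x : ↥I) (y : R), y ∈ maximalIdeal R ^ k →
      ((φ x : MatlisE R) : R →+ QmodZ) y = 0 := by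
    intro x
    have hx : x ∈ Submodule.span R (s : Set ↥I) := by rw [hs]; exact Submodule.mem_top
    induction hx using Submodule.span_induction with
    | mem z hz =>
      intro y hy
      exact ((φ z).2).choose_spec y (Ideal.pow_le_pow_right (Finset.le_sup hz) hy)
    | zero => intro y hy; rw [map_zero]; rfl
    | add a b ha hb iha ihb =>
      intro y hy
      rw [map_add]
      show ((φ a : MatlisE R) : R →+ QmodZ) y + ((φ b : MatlisE R) : R →+ QmodZ) y = 0
      rw [iha y hy, ihb y hy, add_zero]
    | smul r a ha iha =>
      intro y hy
      rw [map_smul, smul_apply, iha _ (Ideal.mul_mem_left _ r hy)]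
  -- Step 2: the functional F on I
  set F : ↥I → QmodZ := fun x => ((φ x : MatlisE R) : R →+ QmodZ) 1 with hF_def
  have F_add : ∀ a b : ↥I, F (a + b) = F a + F b := by
    intro a b
    show ((φ (a + b) : MatlisE R) : R →+ QmodZ) 1 = _
    rw [map_add]; rfl
  have F_sub : ∀ a b : ↥I, F (a - b) = F a - F b := by
    intro a b
    show ((φ (a - b) : MatlisE R) : R →+ QmodZ) 1 = _
    rw [map_sub]; rfl
  have F_zero : F 0 = 0 := by
    show ((φ 0 : MatlisE R) : R →+ QmodZ) 1 = 0
    rw [map_zero]; rfl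
  -- Step 3: F vanishes on 𝔪^k • I
  have key0 : ∀ w ∈ (maximalIdeal R ^ k • I : Ideal R), ∃ hw : w ∈ I, F ⟨w, hw⟩ = 0 := by
    intro w hw
    refine Submodule.smul_induction_on hw ?_ ?_
    · intro r hr x hx
      refine ⟨Submodule.smul_mem I r hx, ?_⟩
      have : (⟨r • x, Submodule.smul_mem I r hx⟩ : ↥I) = r • (⟨x, hx⟩ : ↥I) := rfl
      rw [hF_def]
      show ((φ ⟨r • x, _⟩ : MatlisE R) : R →+ QmodZ) 1 = 0
      rw [this, map_smul, smul_apply, mul_one]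
      exact hk _ r hr
    · rintro a b ⟨ha, va⟩ ⟨hb, vb⟩
      refine ⟨add_mem ha hb, ?_⟩
      have : (⟨a + b, add_mem ha hb⟩ : ↥I) = ⟨a, ha⟩ + ⟨b, hb⟩ := rfl
      rw [this, F_add, va, vb, add_zero]
  -- Step 4: Artin-Rees
  obtain ⟨c, hc⟩ := Ideal.exists_pow_inf_eq_pow_smul (maximalIdeal R) (I : Submodule R R)
  set n : ℕ := c + k with hn_def
  have hAR : ∀ w, w ∈ I → w ∈ maximalIdeal R ^ n → w ∈ (maximalIdeal R ^ k • I : Ideal R) := by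
    intro w hwI hwm
    have h1 := hc n (Nat.le_add_right c k)
    have h2 : w ∈ maximalIdeal R ^ n • (⊤ : Submodule R R) ⊓ I := by
      constructor
      · rw [Ideal.smul_eq_mul, Ideal.mul_top]; exact hwm
      · exact hwI
    rw [h1] at h2
    have h3 : maximalIdeal R ^ (n - c) • (maximalIdeal R ^ c • (⊤ : Submodule R R) ⊓ I)
        ≤ maximalIdeal R ^ k • I := by
      have : n - c = k := by omega
      rw [this]
      exact Submodule.smul_mono le_rfl inf_le_right
    exact h3 h2
  have key1 : ∀ w (hwI : w ∈ I), w ∈ maximalIdeal R ^ n → F ⟨w, hwI⟩ = 0 := by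
    intro w hwI hwm
    obtain ⟨hw, hv⟩ := key0 w (hAR w hwI hwm)
    exact hv
  -- Step 5: extension to J = I ⊔ 𝔪^n
  set J : Ideal R := I ⊔ maximalIdeal R ^ n with hJ_def
  have hdecomp : ∀ z : ↥J, ∃ y, ∃ hy : y ∈ I, ∃ m ∈ maximalIdeal R ^ n, y + m = (z : R) := by
    intro z
    obtain ⟨y, hy, m, hm, h⟩ := Submodule.mem_sup.mp z.2
    exact ⟨y, hy, m, hm, h⟩
  have Fdiff : ∀ y y' (hy : y ∈ I) (hy' : y' ∈ I), y - y' ∈ maximalIdeal R ^ n →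
      F ⟨y, hy⟩ = F ⟨y', hy'⟩ := by
    intro y y' hy hy' hmem
    have hsub : y - y' ∈ I := sub_mem hy hy'
    have h0 : F ⟨y - y', hsub⟩ = 0 := key1 _ hsub hmem
    have : (⟨y - y', hsub⟩ : ↥I) = ⟨y, hy⟩ - ⟨y', hy'⟩ := rfl
    rw [this, F_sub] at h0
    exact sub_eq_zero.mp h0
  have Hex : ∃ Hfun : ↥J → QmodZ, ∀ (z : ↥J) y (hy : y ∈ I) m, m ∈ maximalIdeal R ^ n →
      y + m = (z : R) → Hfun z = F ⟨y, hy⟩ := by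
    refine ⟨fun z => F ⟨(hdecomp z).choose, (hdecomp z).choose_spec.choose⟩, ?_⟩
    intro z y hy m hm hz
    obtain ⟨m', hm', hz'⟩ := (hdecomp z).choose_spec.choose_spec
    refine Fdiff _ _ _ _ ?_
    have heq : (hdecomp z).choose - y = m - m' := by
      have h2 : (hdecomp z).choose + m' = y + m := by rw [hz', hz]
      rw [sub_eq_sub_iff_add_eq_add, h2]
      ring
    rw [heq]
    exact sub_mem hm hm'
  obtain ⟨Hfun, Hspec⟩ := Hex
  have H_add : ∀ z1 z2 : ↥J, Hfun (z1 + z2) = Hfun z1 + Hfun z2 := by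
    intro z1 z2
    obtain ⟨y1, hy1, m1, hm1, h1⟩ := hdecomp z1
    obtain ⟨y2, hy2, m2, hm2, h2⟩ := hdecomp z2
    rw [Hspec z1 y1 hy1 m1 hm1 h1, Hspec z2 y2 hy2 m2 hm2 h2,
      Hspec (z1 + z2) (y1 + y2) (add_mem hy1 hy2) (m1 + m2) (add_mem hm1 hm2)
        (by rw [Submodule.coe_add, ← h1, ← h2]; ring)]
    have : (⟨y1 + y2, add_mem hy1 hy2⟩ : ↥I) = ⟨y1, hy1⟩ + ⟨y2, hy2⟩ := rfl
    rw [this, F_add]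
  set H : ↥J →+ QmodZ := AddMonoidHom.mk' Hfun H_add with hH_def
  -- Step 6: extend to R using injectivity of ℚ/ℤ
  obtain ⟨G, hG⟩ := injQZ.out (J.subtype.toAddMonoidHom.toIntLinearMap)
    (fun a b hab => Subtype.coe_injective hab) H.toIntLinearMap
  have hGspec : ∀ (x : R) (hx : x ∈ J), G x = Hfun ⟨x, hx⟩ := fun x hx => hG ⟨x, hx⟩
  have Gvan : ∀ r x : R, x ∈ maximalIdeal R ^ n → G (r * x) = 0 := by
    intro r x hx
    have hmn : r * x ∈ maximalIdeal R ^ n := Ideal.mul_mem_left _ r hx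
    have hJm : r * x ∈ J := Submodule.mem_sup_right hmn
    rw [hGspec _ hJm, Hspec ⟨r * x, hJm⟩ 0 (zero_mem I) (r * x) hmn (zero_add _)]
    have : (⟨(0 : R), zero_mem I⟩ : ↥I) = 0 := rfl
    rw [this, F_zero]
  -- Step 7: the extension ψ : R →ₗ[R] MatlisE R
  refine ⟨⟨⟨fun r => ⟨(G.toAddMonoidHom).comp (AddMonoidHom.mulLeft r),
      ⟨n, fun x hx => Gvan r x hx⟩⟩, ?_⟩, ?_⟩, ?_⟩
  · intro r s
    apply Subtype.ext
    apply AddMonoidHom.ext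
    intro x
    show G ((r + s) * x) = G (r * x) + G (s * x)
    rw [add_mul, map_add]
  · intro s r
    apply Subtype.ext
    apply AddMonoidHom.ext
    intro x
    show G ((s • r) * x) = G (r * (s * x))
    rw [smul_eq_mul]
    congr 1
    ring
  · intro x mem
    apply Subtype.ext
    apply AddMonoidHom.ext
    intro y
    show G (x * y) = ((φ ⟨x, mem⟩ : MatlisE R) : R →+ QmodZ) y
    have hxyI : x * y ∈ I := by rw [mul_comm]; exact Ideal.mul_mem_left I y mem
    have hxyJ : x * y ∈ J := Submodule.mem_sup_left hxyI
    rw [hGspec _ hxyJ, Hspec ⟨x * y, hxyJ⟩ (x * y) hxyI 0 (zero_mem _) (add_zero _)]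
    have : (⟨x * y, hxyI⟩ : ↥I) = y • (⟨x, mem⟩ : ↥I) := Subtype.ext (by
      show x * y = y • x
      rw [smul_eq_mul, mul_comm])
    rw [hF_def]
    show ((φ ⟨x * y, hxyI⟩ : MatlisE R) : R →+ QmodZ) 1 = _
    rw [this, map_smul, smul_apply, mul_one]
end

section
/- Let R be a commutative Noetherian local ring with maximal ideal 𝔪 which is 𝔪-adically complete and has finite residue field. Let E be the R-module of additive group homomorphisms f : R → ℚ/ℤ such that f vanishes on 𝔪^k for some k, with R-action (r·f)(x) = f(rx). Then the submodule E_0 = { f ∈ E | f vanishes on 𝔪 } is an essential submodule of E: every nonzero R-submodule H of E contains a nonzero element f with f vanishing on 𝔪. -/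
open IsLocalRing

/-- Let `R` be a commutative Noetherian local ring with maximal ideal `𝔪`,
`𝔪`-adically complete and with finite residue field, and let `E` be the `R`-module of additive
homomorphisms `f : R → ℚ/ℤ` vanishing on some power of `𝔪` (with action `(r·f)(x) = f(rx)`).
Then the submodule `E₀ = {f ∈ E | f` vanishes on `𝔪}` is essential in `E`: every nonzero
`R`-submodule `H` of `E` contains a nonzero element `f` vanishing on `𝔪`. -/
theorem stmt13 (R : Type) [CommRing R] [IsLocalRing R] [IsNoetherianRing R]
    [IsAdicComplete (maximalIdeal R) R] [Finite (ResidueField R)] :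
    ∀ H : Submodule R (MatlisE R), H ≠ ⊥ →
      ∃ f ∈ H, f ≠ 0 ∧ ∀ x ∈ maximalIdeal R, (f : R →+ QmodZ) x = 0 := by
  intro H hH
  obtain ⟨f, hfH, hf0⟩ := (Submodule.ne_bot_iff H).mp hH
  have hex : ∃ k : ℕ, ∀ x ∈ maximalIdeal R ^ k, (f : R →+ QmodZ) x = 0 := f.2
  classical
  set n := Nat.find hex with hn
  have hnspec := Nat.find_spec hex
  have hn1 : 1 ≤ n := by
    by_contra h
    push_neg at h
    interval_cases n
    · apply hf0
      apply Subtype.ext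
      ext x
      have := hnspec x (by rw [← hn, pow_zero, Ideal.one_eq_top]; trivial)
      simpa using this
  have hmin : ¬ ∀ x ∈ maximalIdeal R ^ (n - 1), (f : R →+ QmodZ) x = 0 :=
    Nat.find_min hex (by omega)
  push_neg at hmin
  obtain ⟨x, hxmem, hxne⟩ := hmin
  refine ⟨x • f, H.smul_mem x hfH, ?_, ?_⟩
  · intro h
    apply hxne
    have h1 : ((x • f : MatlisE R) : R →+ QmodZ) 1 = (f : R →+ QmodZ) x := by
      show (f : R →+ QmodZ) (x * 1) = _
      rw [mul_one]
    rw [← h1, h]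
    rfl
  · intro y hy
    show (f : R →+ QmodZ) (x * y) = 0
    apply hnspec
    have : maximalIdeal R ^ (n - 1) * maximalIdeal R ≤ maximalIdeal R ^ n := by
      rw [← pow_succ]
      exact Ideal.pow_le_pow_right (by omega)
    exact this (Ideal.mul_mem_mul hxmem hy)
end

section
/- Let R be a commutative Noetherian local ring with maximal ideal 𝔪 which is 𝔪-adically complete and has finite residue field. Let E be the R-module of additive group homomorphisms f : R → ℚ/ℤ such that f vanishes on 𝔪^k for some k, with R-action (r·f)(x) = f(rx). Let M be a finitely generated R-module. Then the map φ ↦ (x ↦ φ(x)(1)) is an isomorphism from Hom_R(M, E) onto the group of additive homomorphisms f : M → ℚ/ℤ such that f vanishes on 𝔪^k·M for some k. -/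
open IsLocalRing

/-- Evaluation at `1 ∈ R`: the additive homomorphism `M → ℚ/ℤ`, `x ↦ φ(x)(1)`, associated to an
`R`-linear map `φ : M → E`. -/
def evalOne (R : Type) [CommRing R] [IsLocalRing R]
    (M : Type) [AddCommGroup M] [Module R M] (φ : M →ₗ[R] MatlisE R) : M →+ QmodZ where
  toFun x := (φ x : R →+ QmodZ) 1
  map_zero' := by simp only [map_zero]; rfl
  map_add' x y := by simp only [map_add]; rfl

lemma matlis_smul_apply {R : Type} [CommRing R] [IsLocalRing R] (r : R) (f : MatlisE R)
    (x : R) : ((r • f : MatlisE R) : R →+ QmodZ) x = (f : R →+ QmodZ) (r * x) := rfl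

/-- The inverse construction: from an additive map `f : M → ℚ/ℤ` vanishing on `𝔪^k • M`,
build the `R`-linear map `x ↦ (r ↦ f (r • x))`. -/
def mkHom {R : Type} [CommRing R] [IsLocalRing R] {M : Type} [AddCommGroup M] [Module R M]
    (f : M →+ QmodZ) (k : ℕ)
    (hf : ∀ x ∈ (maximalIdeal R ^ k • (⊤ : Submodule R M) : Submodule R M), f x = 0) :
    M →ₗ[R] MatlisE R where
  toFun x := ⟨{ toFun := fun r => f (r • x)
                map_zero' := by show f ((0:R) • x) = 0; rw [zero_smul, map_zero]
                map_add' := fun r s => by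
                  show f ((r + s) • x) = f (r • x) + f (s • x)
                  rw [add_smul, map_add] },
    ⟨k, fun r hr => hf _ (Submodule.smul_mem_smul hr trivial)⟩⟩
  map_add' x y := Subtype.ext (AddMonoidHom.ext fun r => by
    show f (r • (x + y)) = f (r • x) + f (r • y)
    rw [smul_add, map_add])
  map_smul' c x := Subtype.ext (AddMonoidHom.ext fun r => by
    show f (r • c • x) = f ((c * r) • x)
    rw [mul_comm, mul_smul])

/-- Let `R` be a commutative Noetherian local ring with maximal ideal `𝔪`,
`𝔪`-adically complete and with finite residue field, and let `E` be the `R`-module of additive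
homomorphisms `f : R → ℚ/ℤ` vanishing on some power of `𝔪` (with action `(r·f)(x) = f(rx)`).
Let `M` be a finitely generated `R`-module.  Then `φ ↦ (x ↦ φ(x)(1))` is an isomorphism (an
injective additive map) from `Hom_R(M, E)` onto the group of additive homomorphisms
`f : M → ℚ/ℤ` vanishing on `𝔪^k·M` for some `k`. -/
theorem stmt14 (R : Type) [CommRing R] [IsLocalRing R] [IsNoetherianRing R]
    [IsAdicComplete (maximalIdeal R) R] [Finite (ResidueField R)]
    (M : Type) [AddCommGroup M] [Module R M] [Module.Finite R M] :
    Function.Injective (evalOne R M) ∧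
      (∀ φ ψ : M →ₗ[R] MatlisE R, evalOne R M (φ + ψ) = evalOne R M φ + evalOne R M ψ) ∧
      Set.range (evalOne R M) =
        {f : M →+ QmodZ | ∃ k : ℕ,
          ∀ x ∈ (maximalIdeal R ^ k • (⊤ : Submodule R M) : Submodule R M), f x = 0} := by
  have key : ∀ (φ : M →ₗ[R] MatlisE R) (x : M) (r : R),
      (φ x : R →+ QmodZ) r = evalOne R M φ (r • x) := by
    intro φ x r
    show (φ x : R →+ QmodZ) r = (φ (r • x) : R →+ QmodZ) 1
    rw [map_smul, matlis_smul_apply, mul_one]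
  refine ⟨?_, ?_, ?_⟩
  · intro φ ψ h
    ext x : 1
    refine Subtype.ext (AddMonoidHom.ext fun r => ?_)
    rw [key, key, h]
  · intro φ ψ
    ext x
    rfl
  · ext f
    constructor
    · rintro ⟨φ, rfl⟩
      obtain ⟨S, hS⟩ := Module.Finite.fg_top (R := R) (M := M)
      classical
      set K : ℕ := S.sup (fun s => (φ s).2.choose) with hK
      have claim : ∀ n : M, ∀ r ∈ maximalIdeal R ^ K, (φ n : R →+ QmodZ) r = 0 := by
        intro n
        have hn : n ∈ Submodule.span R (S : Set M) := by rw [hS]; trivial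
        induction hn using Submodule.span_induction with
        | mem s hs =>
          intro r hr
          exact (φ s).2.choose_spec r
            (Ideal.pow_le_pow_right (Finset.le_sup hs) hr)
        | zero => intro r hr; rw [map_zero]; rfl
        | add x y _ _ hx hy =>
          intro r hr
          rw [map_add]
          show (φ x : R →+ QmodZ) r + (φ y : R →+ QmodZ) r = 0
          rw [hx r hr, hy r hr, add_zero]
        | smul c x _ hx =>
          intro r hr
          rw [map_smul, matlis_smul_apply]
          exact hx _ (Ideal.mul_mem_left _ c hr)
      refine ⟨K, fun x hx => Submodule.smul_induction_on hx (fun r hr n _ => ?_)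
        (fun x y hx hy => ?_)⟩
      · show (φ (r • n) : R →+ QmodZ) 1 = 0
        rw [map_smul, matlis_smul_apply, mul_one]
        exact claim n r hr
      · rw [map_add, hx, hy, add_zero]
    · rintro ⟨k, hk⟩
      refine ⟨mkHom f k hk, AddMonoidHom.ext fun x => ?_⟩
      show f ((1 : R) • x) = f x
      rw [one_smul]
end
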